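/- Let P : Dom(P) ⊆ H₁ → H₂ be a closed operator whose graph is a closed subspace of H₁ × H₂ and suppose P is Fredholm. Let (P_t)_{t∈[0,1]} be a family of Fredholm operators such that for each t there is ε_t > 0 with δ̂(P_t, P_{t+s}) ≤ c_t |s| for |s| ≤ ε_t. Then ind P_t is constant on [0,1]. -/

import Mathlib

open Module
set_option maxHeartbeats 1000000


open Module

def IsFredholmPMap {H₁ H₂ : Type*}
    [NormedAddCommGroup H₁] [InnerProductSpace ℂ H₁] [CompleteSpace H₁]
    [NormedAddCommGroup H₂] [InnerProductSpace ℂ H₂] [CompleteSpace H₂]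
    (P : H₁ →ₗ.[ℂ] H₂) : Prop :=
  IsClosed (P.graph : Set (H₁ × H₂)) ∧
  IsClosed ((LinearMap.range P.toFun : Submodule ℂ H₂) : Set H₂) ∧
  FiniteDimensional ℂ (LinearMap.ker P.toFun) ∧
  FiniteDimensional ℂ (H₂ ⧸ LinearMap.range P.toFun)

noncomputable def indPMap {H₁ H₂ : Type*}
    [NormedAddCommGroup H₁] [InnerProductSpace ℂ H₁] [CompleteSpace H₁]
    [NormedAddCommGroup H₂] [InnerProductSpace ℂ H₂] [CompleteSpace H₂]
    (P : H₁ →ₗ.[ℂ] H₂) : ℤ :=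
  (finrank ℂ (LinearMap.ker P.toFun) : ℤ) - (finrank ℂ (H₂ ⧸ LinearMap.range P.toFun) : ℤ)

/-- The Hilbert norm `‖(u,f)‖ = (‖u‖² + ‖f‖²)^{1/2}` on `H₁ × H₂`. -/
noncomputable def pairNorm {H₁ H₂ : Type*}
    [NormedAddCommGroup H₁] [NormedAddCommGroup H₂] (p : H₁ × H₂) : ℝ :=
  Real.sqrt (‖p.1‖ ^ 2 + ‖p.2‖ ^ 2)

/-- Distance (w.r.t. the Hilbert norm on `H₁ × H₂`) from a point to a set. -/
noncomputable def pairDist {H₁ H₂ : Type*}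
    [NormedAddCommGroup H₁] [NormedAddCommGroup H₂]
    (p : H₁ × H₂) (s : Set (H₁ × H₂)) : ℝ :=
  ⨅ q : s, pairNorm (p - (q : H₁ × H₂))

/-- The directed gap `δ(P,S)`: supremum over unit vectors of the graph of `P` of the
distance to the graph of `S`. -/
noncomputable def gapDelta {H₁ H₂ : Type*}
    [NormedAddCommGroup H₁] [InnerProductSpace ℂ H₁] [CompleteSpace H₁]
    [NormedAddCommGroup H₂] [InnerProductSpace ℂ H₂] [CompleteSpace H₂]
    (P S : H₁ →ₗ.[ℂ] H₂) : ℝ :=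
  ⨆ x : {x : H₁ × H₂ // x ∈ P.graph ∧ pairNorm x = 1},
    pairDist (x : H₁ × H₂) (S.graph : Set (H₁ × H₂))

/-- The gap `δ̂(P,S) = max{δ(P,S), δ(S,P)}` between two closed operators. -/
noncomputable def gapHat {H₁ H₂ : Type*}
    [NormedAddCommGroup H₁] [InnerProductSpace ℂ H₁] [CompleteSpace H₁]
    [NormedAddCommGroup H₂] [InnerProductSpace ℂ H₂] [CompleteSpace H₂]
    (P S : H₁ →ₗ.[ℂ] H₂) : ℝ :=
  max (gapDelta P S) (gapDelta S P)



section Schur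
variable {X Y : Type*}
    [NormedAddCommGroup X] [InnerProductSpace ℂ X] [CompleteSpace X]
    [NormedAddCommGroup Y] [InnerProductSpace ℂ Y] [CompleteSpace Y]

lemma index_stability (T : X →L[ℂ] Y)
    (hker : FiniteDimensional ℂ (LinearMap.ker T.toLinearMap))
    (hcl : IsClosed ((LinearMap.range T.toLinearMap : Submodule ℂ Y) : Set Y))
    (hcoker : FiniteDimensional ℂ (Y ⧸ LinearMap.range T.toLinearMap)) :
    ∃ ε > 0, ∀ S : X →L[ℂ] Y, ‖S - T‖ < ε →
      (finrank ℂ (LinearMap.ker S.toLinearMap) : ℤ) - (finrank ℂ (Y ⧸ LinearMap.range S.toLinearMap) : ℤ)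
        = (finrank ℂ (LinearMap.ker T.toLinearMap) : ℤ) - (finrank ℂ (Y ⧸ LinearMap.range T.toLinearMap) : ℤ) := by
  classical
  set K : Submodule ℂ X := LinearMap.ker T.toLinearMap with hK
  set R : Submodule ℂ Y := LinearMap.range T.toLinearMap with hR
  haveI : FiniteDimensional ℂ K := hker
  haveI : CompleteSpace K := FiniteDimensional.complete ℂ K
  haveI : CompleteSpace R := hcl.completeSpace_coe
  haveI : CompleteSpace (Kᗮ : Submodule ℂ X) :=
    (Submodule.isClosed_orthogonal K).completeSpace_coe
  haveI : CompleteSpace (Rᗮ : Submodule ℂ Y) :=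
    (Submodule.isClosed_orthogonal R).completeSpace_coe
  haveI hRperpFD : FiniteDimensional ℂ (Rᗮ : Submodule ℂ Y) :=
    (Submodule.quotientEquivOfIsCompl R Rᗮ R.isCompl_orthogonal).finiteDimensional
  have hRperp_rank : finrank ℂ (Y ⧸ R) = finrank ℂ (Rᗮ : Submodule ℂ Y) :=
    (Submodule.quotientEquivOfIsCompl R Rᗮ R.isCompl_orthogonal).finrank_eq
  -- the restricted bijection T₀ : Kᗮ → R
  set T₀ : (Kᗮ : Submodule ℂ X) →L[ℂ] R :=
    (Submodule.orthogonalProjectionOnto R).comp (T.comp (Kᗮ : Submodule ℂ X).subtypeL) with hT₀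
  have hT₀coe : ∀ m : (Kᗮ : Submodule ℂ X), (T₀ m : Y) = T m := by
    intro m
    simp only [hT₀, ContinuousLinearMap.comp_apply, Submodule.coe_subtypeL',
      Submodule.coe_subtype]
    exact Submodule.starProjection_eq_self_iff.2 (LinearMap.mem_range_self _ _)
  have hT₀inj : LinearMap.ker T₀.toLinearMap = ⊥ := by
    rw [LinearMap.ker_eq_bot']
    intro m hm
    have hTm : T m = 0 := by rw [← hT₀coe m, show T₀ m = 0 from hm]; simp
    have hmK : (m : X) ∈ K := LinearMap.mem_ker.2 hTm
    have := (Submodule.orthogonal_disjoint K).le_bot (⟨hmK, m.2⟩ : (m : X) ∈ K ⊓ Kᗮ)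
    exact Subtype.ext (by simpa using this)
  have hT₀surj : LinearMap.range T₀.toLinearMap = ⊤ := by
    rw [LinearMap.range_eq_top]
    rintro ⟨y, x, rfl⟩
    refine ⟨Submodule.orthogonalProjectionOnto Kᗮ x, ?_⟩
    apply Subtype.ext
    show ((T₀ (Submodule.orthogonalProjectionOnto Kᗮ x) : R) : Y) = T x
    rw [hT₀coe]
    have hdec : ((Submodule.orthogonalProjectionOnto K x : X)) + ((Submodule.orthogonalProjectionOnto Kᗮ x : X)) = x :=
      K.starProjection_add_starProjection_orthogonal x
    have hkk : T ((Submodule.orthogonalProjectionOnto K x : X)) = 0 := (Submodule.orthogonalProjectionOnto K x).2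
    calc T ((Submodule.orthogonalProjectionOnto Kᗮ x : X))
        = T ((Submodule.orthogonalProjectionOnto K x : X)) + T ((Submodule.orthogonalProjectionOnto Kᗮ x : X)) := by
          rw [hkk, zero_add]
      _ = T x := by rw [← map_add, hdec]
  set T₀e : (Kᗮ : Submodule ℂ X) ≃L[ℂ] R :=
    ContinuousLinearEquiv.ofBijective T₀ hT₀inj hT₀surj with hT₀e
  have hT₀e_apply : ∀ m, T₀e m = T₀ m := fun m => rfl
  refine ⟨(1 + ‖(T₀e.symm : R →L[ℂ] (Kᗮ : Submodule ℂ X))‖)⁻¹, by positivity, ?_⟩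
  -- main claim : for every S close to T the index equals finrank K - finrank Rᗮ
  have main : ∀ S : X →L[ℂ] Y, ‖S - T‖ < (1 + ‖(T₀e.symm : R →L[ℂ] (Kᗮ : Submodule ℂ X))‖)⁻¹ →
      (finrank ℂ (LinearMap.ker S.toLinearMap) : ℤ) - (finrank ℂ (Y ⧸ LinearMap.range S.toLinearMap) : ℤ)
        = (finrank ℂ K : ℤ) - (finrank ℂ (Rᗮ : Submodule ℂ Y) : ℤ) := by
    intro S hS
    set ns : ℝ := ‖(T₀e.symm : R →L[ℂ] (Kᗮ : Submodule ℂ X))‖ with hns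
    -- projections contract
    have hprR : ∀ z : Y, ‖(Submodule.orthogonalProjectionOnto R z : R)‖ ≤ ‖z‖ := by
      intro z
      calc ‖(Submodule.orthogonalProjectionOnto R z : R)‖ ≤ ‖Submodule.orthogonalProjectionOnto R‖ * ‖z‖ :=
            (Submodule.orthogonalProjectionOnto R).le_opNorm z
        _ ≤ 1 * ‖z‖ := mul_le_mul_of_nonneg_right (Submodule.orthogonalProjectionOnto_norm_le R) (norm_nonneg z)
        _ = ‖z‖ := one_mul _
    -- matrix components
    set a : (Kᗮ : Submodule ℂ X) →L[ℂ] R :=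
      (Submodule.orthogonalProjectionOnto R).comp (S.comp (Kᗮ : Submodule ℂ X).subtypeL) with ha'
    set b : (K : Submodule ℂ X) →L[ℂ] R :=
      (Submodule.orthogonalProjectionOnto R).comp (S.comp K.subtypeL) with hb'
    set c : (Kᗮ : Submodule ℂ X) →L[ℂ] (Rᗮ : Submodule ℂ Y) :=
      (Submodule.orthogonalProjectionOnto Rᗮ).comp (S.comp (Kᗮ : Submodule ℂ X).subtypeL) with hc'
    set d : (K : Submodule ℂ X) →L[ℂ] (Rᗮ : Submodule ℂ Y) :=
      (Submodule.orthogonalProjectionOnto Rᗮ).comp (S.comp K.subtypeL) with hd'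
    have hTa : ‖T₀ - a‖ ≤ ‖S - T‖ := by
      refine ContinuousLinearMap.opNorm_le_bound _ (norm_nonneg _) (fun m => ?_)
      have h1 : (T₀ - a) m = Submodule.orthogonalProjectionOnto R ((T - S) (m : X)) := by
        simp [hT₀, ha', ContinuousLinearMap.sub_apply, ContinuousLinearMap.comp_apply, map_sub]
      rw [h1]
      calc ‖(Submodule.orthogonalProjectionOnto R ((T - S) (m : X)) : R)‖ ≤ ‖(T - S) (m : X)‖ := hprR _
        _ ≤ ‖T - S‖ * ‖(m : X)‖ := (T - S).le_opNorm _
        _ = ‖S - T‖ * ‖m‖ := by rw [norm_sub_rev]; rfl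
    -- a is invertible
    set w : (Kᗮ : Submodule ℂ X) →L[ℂ] (Kᗮ : Submodule ℂ X) :=
      (T₀e.symm : R →L[ℂ] (Kᗮ : Submodule ℂ X)).comp (T₀ - a) with hw'
    have hwn : ‖w‖ < 1 := by
      have h1 : ‖w‖ ≤ ns * ‖T₀ - a‖ := ContinuousLinearMap.opNorm_comp_le _ _
      have hns0 : (0:ℝ) ≤ ns := by rw [hns]; exact norm_nonneg ((T₀e.symm : R →L[ℂ] (Kᗮ : Submodule ℂ X)))
      have h2 : ns * ‖T₀ - a‖ ≤ ns * ‖S - T‖ :=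
        mul_le_mul_of_nonneg_left hTa hns0
      have hpos : (0:ℝ) < 1 + ns := by positivity
      have h3 : ns * ‖S - T‖ ≤ ns * (1 + ns)⁻¹ :=
        mul_le_mul_of_nonneg_left hS.le hns0
      have h4 : ns * (1 + ns)⁻¹ < 1 := by
        rw [mul_inv_lt_iff₀ hpos]; linarith
      linarith
    have hT₀symm : ∀ z : R, T₀ (T₀e.symm z) = z := by
      intro z
      have := T₀e.apply_symm_apply z
      rwa [hT₀e_apply] at this
    set u : ((Kᗮ : Submodule ℂ X) →L[ℂ] (Kᗮ : Submodule ℂ X))ˣ := Units.oneSub w hwn with hu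
    have huval : (u : (Kᗮ : Submodule ℂ X) →L[ℂ] (Kᗮ : Submodule ℂ X)) = 1 - w := rfl
    have hmulinv : ∀ x, u.inv (u.val x) = x := by
      intro x
      rw [← ContinuousLinearMap.mul_apply, Units.inv_eq_val_inv, u.inv_mul]
      rfl
    have hinvmul : ∀ x, u.val (u.inv x) = x := by
      intro x
      rw [← ContinuousLinearMap.mul_apply, Units.inv_eq_val_inv, u.mul_inv]
      rfl
    have ha : ∀ m, a m = T₀ (u.val m) := by
      intro m
      have h1 : u.val m = m - T₀e.symm ((T₀ - a) m) := rfl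
      rw [h1, map_sub, hT₀symm]
      simp [ContinuousLinearMap.sub_apply]
    set aE : (Kᗮ : Submodule ℂ X) ≃L[ℂ] R :=
      (ContinuousLinearEquiv.equivOfInverse u.val u.inv hmulinv hinvmul).trans T₀e with haE'
    have haE_apply : ∀ m, aE m = a m := by
      intro m
      rw [ha]
      rfl
    have haE_symm : ∀ z : R, a (aE.symm z) = z := by
      intro z; rw [← haE_apply]; exact aE.apply_symm_apply z
    have haE_symm' : ∀ m, aE.symm (a m) = m := by
      intro m; rw [← haE_apply]; exact aE.symm_apply_apply m
    -- the Schur complement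
    set g : (K : Submodule ℂ X) →L[ℂ] (Rᗮ : Submodule ℂ Y) :=
      d - c.comp ((aE.symm : R →L[ℂ] (Kᗮ : Submodule ℂ X)).comp b) with hg'
    have hgapp : ∀ k, g k = d k - c (aE.symm (b k)) := by
      intro k; simp [hg', ContinuousLinearMap.sub_apply, ContinuousLinearMap.comp_apply]
    set gl : (K : Submodule ℂ X) →ₗ[ℂ] (Rᗮ : Submodule ℂ Y) := g.toLinearMap with hgl'
    have hglapp : ∀ k, gl k = g k := fun k => rfl
    -- decomposition facts
    have hdecY : ∀ z : Y,
        ((Submodule.orthogonalProjectionOnto R z : Y)) + ((Submodule.orthogonalProjectionOnto Rᗮ z : Y)) = z :=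
      fun z => R.starProjection_add_starProjection_orthogonal z
    have hdecX : ∀ x : X,
        ((Submodule.orthogonalProjectionOnto K x : X)) + ((Submodule.orthogonalProjectionOnto Kᗮ x : X)) = x :=
      fun x => K.starProjection_add_starProjection_orthogonal x
    have hprojRR : ∀ (r : R) (p : (Rᗮ : Submodule ℂ Y)),
        Submodule.orthogonalProjectionOnto R ((r : Y) + (p : Y)) = r := by
      intro r p
      rw [map_add, Submodule.orthogonalProjectionOnto_mem_subspace_eq_self,
        Submodule.orthogonalProjectionOnto_apply_of_mem_orthogonal (Submodule.coe_mem p),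
        add_zero]
    have hprojRp : ∀ (r : R) (p : (Rᗮ : Submodule ℂ Y)),
        Submodule.orthogonalProjectionOnto Rᗮ ((r : Y) + (p : Y)) = p := by
      intro r p
      rw [map_add, Submodule.orthogonalProjectionOnto_mem_subspace_eq_self,
        Submodule.orthogonalProjectionOnto_apply_of_mem_orthogonal
          (R.le_orthogonal_orthogonal (Submodule.coe_mem r)), zero_add]
    have hcomp1 : ∀ (k : (K : Submodule ℂ X)) (m : (Kᗮ : Submodule ℂ X)),
        Submodule.orthogonalProjectionOnto R (S ((k : X) + (m : X))) = b k + a m := by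
      intro k m
      rw [map_add S, map_add]
      rfl
    have hcomp2 : ∀ (k : (K : Submodule ℂ X)) (m : (Kᗮ : Submodule ℂ X)),
        Submodule.orthogonalProjectionOnto Rᗮ (S ((k : X) + (m : X))) = d k + c m := by
      intro k m
      rw [map_add S, map_add]
      rfl
    have hSx : ∀ (k : (K : Submodule ℂ X)) (m : (Kᗮ : Submodule ℂ X)),
        S ((k : X) + (m : X)) = ((b k + a m : R) : Y) + ((d k + c m : (Rᗮ : Submodule ℂ Y)) : Y) := by
      intro k m
      rw [← hcomp1 k m, ← hcomp2 k m, hdecY]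
    -- kernel comparison
    set Φ : (K : Submodule ℂ X) →ₗ[ℂ] X :=
      K.subtype - ((Kᗮ : Submodule ℂ X).subtype ∘ₗ (aE.symm.toLinearMap ∘ₗ (b : (K : Submodule ℂ X) →ₗ[ℂ] R))) with hΦ'
    have hΦapp : ∀ k, Φ k = (k : X) - ((aE.symm (b k) : (Kᗮ : Submodule ℂ X)) : X) := by
      intro k
      rfl
    have hΦapp' : ∀ k, Φ k = (k : X) + ((-(aE.symm (b k)) : (Kᗮ : Submodule ℂ X)) : X) := by
      intro k
      rw [hΦapp, sub_eq_add_neg]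
      norm_cast
    have hSΦ : ∀ k, S (Φ k) = ((g k : (Rᗮ : Submodule ℂ Y)) : Y) := by
      intro k
      rw [hΦapp', hSx k (-(aE.symm (b k)))]
      have h1 : a (-(aE.symm (b k))) = -(b k) := by rw [map_neg, haE_symm]
      have h2 : b k + a (-(aE.symm (b k))) = 0 := by rw [h1, add_neg_cancel]
      rw [h2, hgapp]
      have h3 : d k + c (-(aE.symm (b k))) = d k - c (aE.symm (b k)) := by
        rw [map_neg, ← sub_eq_add_neg]
      rw [h3]
      simp
    have hφbij : ∃ e : (LinearMap.ker gl) ≃ₗ[ℂ] (LinearMap.ker S.toLinearMap),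
        True := by
      have hmem : ∀ y : LinearMap.ker gl, Φ (y : (K : Submodule ℂ X)) ∈ LinearMap.ker S.toLinearMap := by
        intro y
        rw [LinearMap.mem_ker, ContinuousLinearMap.coe_coe, hSΦ]
        have : g (y : (K : Submodule ℂ X)) = 0 := y.2
        rw [this]
        simp
      set φ : (LinearMap.ker gl) →ₗ[ℂ] (LinearMap.ker S.toLinearMap) :=
        LinearMap.codRestrict (LinearMap.ker S.toLinearMap) (Φ ∘ₗ (LinearMap.ker gl).subtype) hmem with hφ'
      have hφinj : Function.Injective φ := by
        intro y₁ y₂ hy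
        have h0 : Φ (y₁ : (K : Submodule ℂ X)) = Φ (y₂ : (K : Submodule ℂ X)) := by
          have := congrArg (Subtype.val) hy
          exact this
        have h1 : ∀ y : LinearMap.ker gl,
            Submodule.orthogonalProjectionOnto K (Φ (y : (K : Submodule ℂ X))) = (y : (K : Submodule ℂ X)) := by
          intro y
          rw [hΦapp', map_add, Submodule.orthogonalProjectionOnto_mem_subspace_eq_self,
            Submodule.orthogonalProjectionOnto_apply_of_mem_orthogonal (Submodule.coe_mem _),
            add_zero]
        apply Subtype.ext
        rw [← h1 y₁, ← h1 y₂, h0]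
      have hφsurj : Function.Surjective φ := by
        rintro ⟨x, hx⟩
        have hx0 : S x = 0 := hx
        set k := Submodule.orthogonalProjectionOnto K x with hk
        set m := Submodule.orthogonalProjectionOnto Kᗮ x with hm
        have hxdec : (k : X) + (m : X) = x := hdecX x
        have hcsum : ((b k + a m : R) : Y) + ((d k + c m : (Rᗮ : Submodule ℂ Y)) : Y) = 0 := by
          rw [← hSx, hxdec, hx0]
        have hR0 : b k + a m = 0 ∧ d k + c m = 0 := by
          constructor
          · have h5 := congrArg (Submodule.orthogonalProjectionOnto R) hcsum
            rwa [hprojRR, map_zero] at h5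
          · have h5 := congrArg (Submodule.orthogonalProjectionOnto Rᗮ) hcsum
            rwa [hprojRp, map_zero] at h5
        have hma : m = -(aE.symm (b k)) := by
          have h6 : a m = -(b k) := by
            have := hR0.1
            rw [add_comm] at this
            exact eq_neg_of_add_eq_zero_left this
          have := congrArg aE.symm h6
          rw [haE_symm'] at this
          rw [this, map_neg]
        have hker : g k = 0 := by
          have h7 : c m = -(c (aE.symm (b k))) := by rw [hma, map_neg]
          rw [hgapp, sub_eq_add_neg, ← h7]
          exact hR0.2
        refine ⟨⟨k, by rw [LinearMap.mem_ker, hglapp, hker]⟩, ?_⟩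
        apply Subtype.ext
        show Φ k = x
        rw [hΦapp', ← hma, hxdec]
      exact ⟨LinearEquiv.ofBijective φ ⟨hφinj, hφsurj⟩, trivial⟩
    obtain ⟨φe, -⟩ := hφbij
    -- cokernel comparison
    set χ : Y →ₗ[ℂ] (Rᗮ : Submodule ℂ Y) :=
      ((Submodule.orthogonalProjectionOnto Rᗮ) : Y →ₗ[ℂ] (Rᗮ : Submodule ℂ Y)) -
        ((c : (Kᗮ : Submodule ℂ X) →ₗ[ℂ] (Rᗮ : Submodule ℂ Y)) ∘ₗ
          (aE.symm.toLinearMap ∘ₗ ((Submodule.orthogonalProjectionOnto R) : Y →ₗ[ℂ] R))) with hχ'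
    have hχapp : ∀ z : Y, χ z = Submodule.orthogonalProjectionOnto Rᗮ z - c (aE.symm (Submodule.orthogonalProjectionOnto R z)) := by
      intro z; rfl
    set ψ : Y →ₗ[ℂ] ((Rᗮ : Submodule ℂ Y) ⧸ LinearMap.range gl) :=
      (LinearMap.range gl).mkQ ∘ₗ χ with hψ'
    have hψapp : ∀ z : Y, ψ z = (LinearMap.range gl).mkQ (χ z) := fun z => rfl
    have hψsurj : Function.Surjective ψ := by
      intro q
      obtain ⟨v, rfl⟩ := (LinearMap.range gl).mkQ_surjective q
      refine ⟨(v : Y), ?_⟩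
      rw [hψapp, hχapp]
      have h1 : Submodule.orthogonalProjectionOnto Rᗮ (v : Y) = v := Submodule.orthogonalProjectionOnto_mem_subspace_eq_self v
      have h2 : Submodule.orthogonalProjectionOnto R (v : Y) = 0 :=
        Submodule.orthogonalProjectionOnto_apply_of_mem_orthogonal (Submodule.coe_mem v)
      rw [h1, h2]
      simp
    have hkψ : LinearMap.ker ψ = LinearMap.range S.toLinearMap := by
      ext z
      constructor
      · intro hz
        rw [LinearMap.mem_ker, hψapp] at hz
        have hz' : χ z ∈ LinearMap.range gl := by
          rwa [← Submodule.ker_mkQ (LinearMap.range gl), LinearMap.mem_ker]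
        obtain ⟨k, hk⟩ := hz'
        rw [hglapp, hgapp] at hk
        rw [hχapp] at hk
        set m : (Kᗮ : Submodule ℂ X) := aE.symm (Submodule.orthogonalProjectionOnto R z - b k) with hm
        refine ⟨(k : X) + (m : X), ?_⟩
        rw [ContinuousLinearMap.coe_coe, hSx]
        have h1 : a m = Submodule.orthogonalProjectionOnto R z - b k := haE_symm _
        have h2 : b k + a m = Submodule.orthogonalProjectionOnto R z := by rw [h1, add_sub_cancel]
        have h3 : d k + c m = Submodule.orthogonalProjectionOnto Rᗮ z := by
          have h4 : c m = c (aE.symm (Submodule.orthogonalProjectionOnto R z)) - c (aE.symm (b k)) := by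
            rw [hm, map_sub aE.symm, map_sub c]
          rw [h4]
          have h5 : d k - c (aE.symm (b k)) =
              Submodule.orthogonalProjectionOnto Rᗮ z - c (aE.symm (Submodule.orthogonalProjectionOnto R z)) := hk
          linear_combination (norm := module) h5
        rw [h2, h3, hdecY]
      · rintro ⟨x, rfl⟩
        rw [LinearMap.mem_ker, hψapp]
        set k := Submodule.orthogonalProjectionOnto K x with hk
        set m := Submodule.orthogonalProjectionOnto Kᗮ x with hm
        have hxdec : (k : X) + (m : X) = x := hdecX x
        rw [← hxdec, ContinuousLinearMap.coe_coe, hSx, hχapp]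
        rw [hprojRR, hprojRp]
        have h3 : d k + c m - c (aE.symm (b k + a m)) = gl k := by
          rw [map_add aE.symm, haE_symm', map_add c, hglapp, hgapp]
          abel
        rw [h3]
        exact (Submodule.Quotient.mk_eq_zero _).2 (LinearMap.mem_range_self gl k)
    have hqe : (Y ⧸ LinearMap.range S.toLinearMap) ≃ₗ[ℂ] ((Rᗮ : Submodule ℂ Y) ⧸ LinearMap.range gl) := by
      rw [← hkψ]
      exact ψ.quotKerEquivOfSurjective hψsurj
    -- the count
    haveI : FiniteDimensional ℂ (LinearMap.ker gl) := by
      apply Submodule.finiteDimensional_of_le (le_top)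
    have hrank1 : finrank ℂ (LinearMap.ker S.toLinearMap) = finrank ℂ (LinearMap.ker gl) := φe.finrank_eq.symm
    have hrank2 : finrank ℂ (Y ⧸ LinearMap.range S.toLinearMap) =
        finrank ℂ ((Rᗮ : Submodule ℂ Y) ⧸ LinearMap.range gl) := hqe.finrank_eq
    have hrank3 : finrank ℂ (LinearMap.range gl) + finrank ℂ (LinearMap.ker gl)
        = finrank ℂ (K : Submodule ℂ X) := LinearMap.finrank_range_add_finrank_ker gl
    have hrank4 : finrank ℂ ((Rᗮ : Submodule ℂ Y) ⧸ LinearMap.range gl) +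
        finrank ℂ (LinearMap.range gl) = finrank ℂ (Rᗮ : Submodule ℂ Y) :=
      Submodule.finrank_quotient_add_finrank (LinearMap.range gl)
    rw [hrank1, hrank2]
    push_cast
    omega
  have h1 := main T (by rw [sub_self, norm_zero]; positivity)
  intro S hS
  rw [main S hS, h1.symm]
end Schur


section Graphs
variable {H₁ H₂ : Type*}
    [NormedAddCommGroup H₁] [InnerProductSpace ℂ H₁] [CompleteSpace H₁]
    [NormedAddCommGroup H₂] [InnerProductSpace ℂ H₂] [CompleteSpace H₂]

/-- The graph of `P` as a submodule of the Hilbert space `WithLp 2 (H₁ × H₂)`. -/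
noncomputable def graphE (P : H₁ →ₗ.[ℂ] H₂) : Submodule ℂ (WithLp 2 (H₁ × H₂)) :=
  P.graph.comap (WithLp.linearEquiv 2 ℂ (H₁ × H₂)).toLinearMap

lemma mem_graphE {P : H₁ →ₗ.[ℂ] H₂} {x : WithLp 2 (H₁ × H₂)} :
    x ∈ graphE P ↔ (WithLp.equiv 2 (H₁ × H₂)) x ∈ P.graph := Iff.rfl

lemma graphE_closed {P : H₁ →ₗ.[ℂ] H₂} (h : IsClosed (P.graph : Set (H₁ × H₂))) :
    IsClosed ((graphE P : Submodule ℂ (WithLp 2 (H₁ × H₂))) : Set (WithLp 2 (H₁ × H₂))) := by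
  have h2 : ((graphE P : Submodule ℂ (WithLp 2 (H₁ × H₂))) : Set (WithLp 2 (H₁ × H₂)))
      = (WithLp.prodContinuousLinearEquiv 2 ℂ H₁ H₂) ⁻¹' (P.graph : Set (H₁ × H₂)) := rfl
  rw [h2]
  exact h.preimage (WithLp.prodContinuousLinearEquiv 2 ℂ H₁ H₂).continuous

/-- Second-coordinate map on `WithLp 2 (H₁ × H₂)`. -/
noncomputable def sndLp : WithLp 2 (H₁ × H₂) →L[ℂ] H₂ :=
  (ContinuousLinearMap.snd ℂ H₁ H₂).comp
    (WithLp.prodContinuousLinearEquiv 2 ℂ H₁ H₂ : WithLp 2 (H₁ × H₂) →L[ℂ] H₁ × H₂)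

lemma sndLp_apply (z : WithLp 2 (H₁ × H₂)) : sndLp z = z.snd := rfl

lemma norm_sndLp_le (z : WithLp 2 (H₁ × H₂)) : ‖sndLp z‖ ≤ ‖z‖ := by
  rw [sndLp_apply, WithLp.prod_norm_eq_of_L2]
  have h2 : ‖z.snd‖ ^ 2 ≤ ‖z.fst‖ ^ 2 + ‖z.snd‖ ^ 2 := by nlinarith [sq_nonneg ‖z.fst‖]
  calc ‖z.snd‖ = Real.sqrt (‖z.snd‖ ^ 2) := (Real.sqrt_sq (norm_nonneg _)).symm
    _ ≤ Real.sqrt (‖z.fst‖ ^ 2 + ‖z.snd‖ ^ 2) := Real.sqrt_le_sqrt h2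

/-- The operator `P` as a bounded operator from its graph. -/
noncomputable def opOf (P : H₁ →ₗ.[ℂ] H₂) : (graphE P) →L[ℂ] H₂ :=
  sndLp.comp (graphE P).subtypeL

lemma opOf_apply (P : H₁ →ₗ.[ℂ] H₂) (x : graphE P) : opOf P x = (x : WithLp 2 (H₁ × H₂)).snd := rfl

lemma ker_opOf (P : H₁ →ₗ.[ℂ] H₂) :
    Nonempty ((LinearMap.ker P.toFun) ≃ₗ[ℂ] (LinearMap.ker (opOf P).toLinearMap)) := by
  classical
  set eL := WithLp.linearEquiv 2 ℂ (H₁ × H₂) with heL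
  have hmem : ∀ u : LinearMap.ker P.toFun, eL.symm (((u : P.domain) : H₁), (0:H₂)) ∈ graphE P := by
    intro u
    rw [mem_graphE]
    have : (WithLp.equiv 2 (H₁ × H₂)) (eL.symm (((u : P.domain) : H₁), (0:H₂)))
        = (((u : P.domain) : H₁), (0:H₂)) := rfl
    rw [this, LinearPMap.mem_graph_iff]
    refine ⟨(u : P.domain), rfl, ?_⟩
    have h3 := u.2
    rw [LinearMap.mem_ker] at h3
    exact h3
  have hker : ∀ u : LinearMap.ker P.toFun,
      (⟨eL.symm (((u : P.domain) : H₁), (0:H₂)), hmem u⟩ : graphE P) ∈ LinearMap.ker (opOf P).toLinearMap := by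
    intro u
    rw [LinearMap.mem_ker]
    rfl
  set α : (LinearMap.ker P.toFun) →ₗ[ℂ] (LinearMap.ker (opOf P).toLinearMap) :=
    { toFun := fun u => ⟨⟨eL.symm (((u : P.domain) : H₁), (0:H₂)), hmem u⟩, hker u⟩
      map_add' := by
        intro u v
        apply Subtype.ext; apply Subtype.ext
        show eL.symm _ = eL.symm _ + eL.symm _
        rw [← map_add]
        congr 1
        simp [Prod.ext_iff]
      map_smul' := by
        intro r u
        apply Subtype.ext; apply Subtype.ext
        show eL.symm _ = r • eL.symm _
        rw [← map_smul]
        congr 1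
        simp [Prod.ext_iff] } with hα
  refine ⟨LinearEquiv.ofBijective α ⟨?_, ?_⟩⟩
  · intro u v huv
    have h1 : eL.symm (((u : P.domain) : H₁), (0:H₂)) = eL.symm (((v : P.domain) : H₁), (0:H₂)) := by
      have := congrArg Subtype.val (congrArg Subtype.val huv)
      exact this
    have h2 := congrArg eL h1
    simp only [LinearEquiv.apply_symm_apply] at h2
    apply Subtype.ext; apply Subtype.ext
    exact congrArg Prod.fst h2
  · rintro ⟨⟨x, hx⟩, hx0⟩
    rw [mem_graphE, LinearPMap.mem_graph_iff] at hx
    obtain ⟨y, hy1, hy2⟩ := hx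
    have hx0' : ((WithLp.equiv 2 (H₁ × H₂)) x).2 = 0 := hx0
    have hPy : P.toFun y = 0 := by
      rw [LinearPMap.toFun_eq_coe, hy2, hx0']
    refine ⟨⟨y, LinearMap.mem_ker.2 hPy⟩, ?_⟩
    apply Subtype.ext; apply Subtype.ext
    show eL.symm ((y : H₁), (0:H₂)) = x
    have hx' : (WithLp.equiv 2 (H₁ × H₂)) x = ((y : H₁), (0:H₂)) := by
      apply Prod.ext
      · exact hy1.symm
      · exact hx0'
    rw [← hx']
    rfl

lemma range_opOf (P : H₁ →ₗ.[ℂ] H₂) :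
    LinearMap.range (opOf P).toLinearMap = LinearMap.range P.toFun := by
  ext z
  constructor
  · rintro ⟨⟨x, hx⟩, rfl⟩
    rw [mem_graphE, LinearPMap.mem_graph_iff] at hx
    obtain ⟨y, hy1, hy2⟩ := hx
    exact ⟨y, by rw [LinearPMap.toFun_eq_coe, hy2]; rfl⟩
  · rintro ⟨u, rfl⟩
    refine ⟨⟨(WithLp.linearEquiv 2 ℂ (H₁ × H₂)).symm ((u : H₁), P u), ?_⟩, ?_⟩
    · rw [mem_graphE]
      exact P.mem_graph u
    · rw [LinearPMap.toFun_eq_coe]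
      rfl

end Graphs

section Gap
variable {H₁ H₂ : Type*}
    [NormedAddCommGroup H₁] [InnerProductSpace ℂ H₁] [CompleteSpace H₁]
    [NormedAddCommGroup H₂] [InnerProductSpace ℂ H₂] [CompleteSpace H₂]

lemma pairNorm_nonneg (p : H₁ × H₂) : 0 ≤ pairNorm p := Real.sqrt_nonneg _

lemma pairNorm_eq (p : H₁ × H₂) :
    pairNorm p = ‖(WithLp.linearEquiv 2 ℂ (H₁ × H₂)).symm p‖ := by
  rw [WithLp.prod_norm_eq_of_L2]
  rfl

lemma pairDist_nonneg (p : H₁ × H₂) (s : Set (H₁ × H₂)) : 0 ≤ pairDist p s :=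
  Real.iInf_nonneg (fun _ => pairNorm_nonneg _)

lemma gapDelta_nonneg (P Q : H₁ →ₗ.[ℂ] H₂) : 0 ≤ gapDelta P Q :=
  Real.iSup_nonneg (fun _ => pairDist_nonneg _ _)

lemma gapHat_nonneg (P Q : H₁ →ₗ.[ℂ] H₂) : 0 ≤ gapHat P Q :=
  le_trans (gapDelta_nonneg P Q) (le_max_left _ _)

lemma pairDist_le_pairNorm (p : H₁ × H₂) (Q : H₁ →ₗ.[ℂ] H₂) :
    pairDist p (Q.graph : Set (H₁ × H₂)) ≤ pairNorm p := by
  have h0 : ((0 : H₁ × H₂)) ∈ (Q.graph : Set (H₁ × H₂)) := Q.graph.zero_mem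
  have h := ciInf_le (f := fun q : (Q.graph : Set (H₁ × H₂)) => pairNorm (p - (q : H₁ × H₂)))
    ⟨0, by rintro r ⟨q, rfl⟩; exact pairNorm_nonneg _⟩ ⟨0, h0⟩
  simpa [pairDist] using h

lemma pairDist_eq (p : H₁ × H₂) (Q : H₁ →ₗ.[ℂ] H₂) :
    pairDist p (Q.graph : Set (H₁ × H₂))
      = ⨅ v : (graphE Q), ‖(WithLp.linearEquiv 2 ℂ (H₁ × H₂)).symm p
          - (v : WithLp 2 (H₁ × H₂))‖ := by
  rw [pairDist, iInf, iInf]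
  congr 1
  ext r
  constructor
  · rintro ⟨⟨q, hq⟩, rfl⟩
    refine ⟨⟨(WithLp.linearEquiv 2 ℂ (H₁ × H₂)).symm q, hq⟩, ?_⟩
    show ‖(WithLp.linearEquiv 2 ℂ (H₁ × H₂)).symm p - (WithLp.linearEquiv 2 ℂ (H₁ × H₂)).symm q‖
        = pairNorm (p - q)
    rw [pairNorm_eq, map_sub]
  · rintro ⟨⟨v, hv⟩, rfl⟩
    refine ⟨⟨(WithLp.linearEquiv 2 ℂ (H₁ × H₂)) v, hv⟩, ?_⟩
    show pairNorm (p - (WithLp.linearEquiv 2 ℂ (H₁ × H₂)) v)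
        = ‖(WithLp.linearEquiv 2 ℂ (H₁ × H₂)).symm p - v‖
    rw [pairNorm_eq, map_sub, LinearEquiv.symm_apply_apply]

lemma dist_le_gapDelta (P Q : H₁ →ₗ.[ℂ] H₂)
    (hc : CompleteSpace (graphE Q))
    (x : WithLp 2 (H₁ × H₂)) (hx : x ∈ graphE P) :
    ‖x - (Submodule.orthogonalProjectionOnto (graphE Q) x : WithLp 2 (H₁ × H₂))‖ ≤ gapDelta P Q * ‖x‖ := by
  haveI := hc
  rcases eq_or_ne x 0 with rfl | hx0
  · simp
  · set cinv : ℂ := (‖x‖ : ℂ)⁻¹ with hcinv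
    set u : WithLp 2 (H₁ × H₂) := cinv • x with hu
    have hxnz : (‖x‖ : ℝ) ≠ 0 := norm_ne_zero_iff.2 hx0
    have hun : ‖u‖ = 1 := by
      rw [hu, norm_smul, hcinv, norm_inv, Complex.norm_real, Real.norm_eq_abs,
        abs_of_nonneg (norm_nonneg x), inv_mul_cancel₀ hxnz]
    have humem : u ∈ graphE P := Submodule.smul_mem _ _ hx
    have hkey : ‖u - (Submodule.orthogonalProjectionOnto (graphE Q) u : WithLp 2 (H₁ × H₂))‖
        ≤ gapDelta P Q := by
      have hpd := pairDist_eq ((WithLp.linearEquiv 2 ℂ (H₁ × H₂)) u) Q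
      simp only [LinearEquiv.symm_apply_apply] at hpd
      rw [Submodule.coe_orthogonalProjectionOnto_apply, Submodule.starProjection_minimal, ← hpd]
      have hmem' : ((WithLp.linearEquiv 2 ℂ (H₁ × H₂)) u) ∈ P.graph := humem
      have hunit : pairNorm ((WithLp.linearEquiv 2 ℂ (H₁ × H₂)) u) = 1 := by
        rw [pairNorm_eq, LinearEquiv.symm_apply_apply, hun]
      have hBdd : BddAbove (Set.range fun y : {y : H₁ × H₂ // y ∈ P.graph ∧ pairNorm y = 1} =>
          pairDist (y : H₁ × H₂) (Q.graph : Set (H₁ × H₂))) := by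
        refine ⟨1, ?_⟩
        rintro r ⟨y, rfl⟩
        exact (pairDist_le_pairNorm _ _).trans (le_of_eq y.2.2)
      unfold gapDelta
      exact le_ciSup hBdd ⟨(WithLp.linearEquiv 2 ℂ (H₁ × H₂)) u, hmem', hunit⟩
    have hx' : x = (‖x‖ : ℂ) • u := by
      rw [hu, smul_smul, hcinv, mul_inv_cancel₀ (by exact_mod_cast hxnz), one_smul]
    have hsplit : x - (Submodule.orthogonalProjectionOnto (graphE Q) x : WithLp 2 (H₁ × H₂))
        = (‖x‖ : ℂ) • (u - (Submodule.orthogonalProjectionOnto (graphE Q) u : WithLp 2 (H₁ × H₂))) := by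
      have hproj : (Submodule.orthogonalProjectionOnto (graphE Q) x : WithLp 2 (H₁ × H₂))
          = (‖x‖ : ℂ) • (Submodule.orthogonalProjectionOnto (graphE Q) u : WithLp 2 (H₁ × H₂)) := by
        conv_lhs => rw [hx']
        rw [map_smul]
        rfl
      rw [smul_sub, ← hproj, ← hx']
    rw [hsplit, norm_smul, Complex.norm_real, Real.norm_eq_abs, abs_of_nonneg (norm_nonneg x)]
    calc ‖x‖ * ‖u - (Submodule.orthogonalProjectionOnto (graphE Q) u : WithLp 2 (H₁ × H₂))‖
        ≤ ‖x‖ * gapDelta P Q := mul_le_mul_of_nonneg_left hkey (norm_nonneg x)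
      _ = gapDelta P Q * ‖x‖ := mul_comm _ _

lemma local_index_step (P : H₁ →ₗ.[ℂ] H₂) (hP : IsFredholmPMap P) :
    ∃ ε > 0, ∀ Q : H₁ →ₗ.[ℂ] H₂, IsFredholmPMap Q → gapHat P Q < ε →
      indPMap Q = indPMap P := by
  obtain ⟨hPg, hPr, hPk, hPc⟩ := hP
  haveI hPcs : CompleteSpace (graphE P) := (graphE_closed hPg).completeSpace_coe
  obtain ⟨e0⟩ := ker_opOf P
  haveI hPk' : FiniteDimensional ℂ (LinearMap.ker P.toFun) := hPk
  haveI hker : FiniteDimensional ℂ (LinearMap.ker (opOf P).toLinearMap) := e0.finiteDimensional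
  have hclosed : IsClosed ((LinearMap.range (opOf P).toLinearMap : Submodule ℂ H₂) : Set H₂) := by
    rw [range_opOf]; exact hPr
  haveI hcoker : FiniteDimensional ℂ (H₂ ⧸ LinearMap.range (opOf P).toLinearMap) := by
    rw [range_opOf]; exact hPc
  obtain ⟨ε₀, hε₀, hstab⟩ := index_stability (opOf P) hker hclosed hcoker
  refine ⟨min ε₀ (1/3), lt_min hε₀ (by norm_num), ?_⟩
  intro Q hQ hgap
  obtain ⟨hQg, hQr, hQk, hQc⟩ := hQ
  haveI hQcs : CompleteSpace (graphE Q) := (graphE_closed hQg).completeSpace_coe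
  set δ := gapHat P Q with hδ
  have hδ0 : 0 ≤ δ := gapHat_nonneg P Q
  have hδ1 : δ < ε₀ := lt_of_lt_of_le hgap (min_le_left _ _)
  have hδ2 : δ < 1/3 := lt_of_lt_of_le hgap (min_le_right _ _)
  have hPQ : ∀ x : WithLp 2 (H₁ × H₂), x ∈ graphE P →
      ‖x - (Submodule.orthogonalProjectionOnto (graphE Q) x : WithLp 2 (H₁ × H₂))‖ ≤ δ * ‖x‖ := by
    intro x hx
    exact (dist_le_gapDelta P Q hQcs x hx).trans
      (mul_le_mul_of_nonneg_right (le_max_left _ _) (norm_nonneg x))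
  have hQP : ∀ x : WithLp 2 (H₁ × H₂), x ∈ graphE Q →
      ‖x - (Submodule.orthogonalProjectionOnto (graphE P) x : WithLp 2 (H₁ × H₂))‖ ≤ δ * ‖x‖ := by
    intro x hx
    exact (dist_le_gapDelta Q P hPcs x hx).trans
      (mul_le_mul_of_nonneg_right (le_max_right _ _) (norm_nonneg x))
  have hprP : ∀ z : WithLp 2 (H₁ × H₂),
      ‖(Submodule.orthogonalProjectionOnto (graphE P) z : WithLp 2 (H₁ × H₂))‖ ≤ ‖z‖ := by
    intro z
    calc ‖(Submodule.orthogonalProjectionOnto (graphE P) z : WithLp 2 (H₁ × H₂))‖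
        ≤ ‖Submodule.orthogonalProjectionOnto (graphE P)‖ * ‖z‖ := (Submodule.orthogonalProjectionOnto (graphE P)).le_opNorm z
      _ ≤ 1 * ‖z‖ := mul_le_mul_of_nonneg_right (Submodule.orthogonalProjectionOnto_norm_le _) (norm_nonneg z)
      _ = ‖z‖ := one_mul _
  set f : (graphE P) →L[ℂ] (graphE Q) :=
    (Submodule.orthogonalProjectionOnto (graphE Q)).comp (graphE P).subtypeL with hf
  have hfdist : ∀ x : graphE P,
      ‖(x : WithLp 2 (H₁ × H₂)) - (f x : WithLp 2 (H₁ × H₂))‖ ≤ δ * ‖x‖ :=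
    fun x => hPQ _ x.2
  have hfinj : LinearMap.ker f.toLinearMap = ⊥ := by
    rw [LinearMap.ker_eq_bot']
    intro x hx
    have h1 : ‖(x : WithLp 2 (H₁ × H₂))‖ ≤ δ * ‖x‖ := by
      have h2 := hfdist x
      rw [show f x = 0 from hx] at h2
      simpa using h2
    have h3 : ‖x‖ ≤ δ * ‖x‖ := h1
    have h4 : ‖x‖ ≤ 0 := by nlinarith [norm_nonneg x]
    have h5 : ‖x‖ = 0 := le_antisymm h4 (norm_nonneg x)
    exact norm_eq_zero.1 h5
  set gOp : (graphE Q) →L[ℂ] (graphE Q) :=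
    (Submodule.orthogonalProjectionOnto (graphE Q)).comp ((graphE P).subtypeL.comp
      ((Submodule.orthogonalProjectionOnto (graphE P)).comp (graphE Q).subtypeL)) with hgOp
  have hgOapp : ∀ y : graphE Q,
      gOp y = f (Submodule.orthogonalProjectionOnto (graphE P) (y : WithLp 2 (H₁ × H₂))) := fun y => rfl
  have hone : ‖(1 : (graphE Q) →L[ℂ] (graphE Q)) - gOp‖ < 1 := by
    have hb : ∀ y : graphE Q, ‖((1 : (graphE Q) →L[ℂ] (graphE Q)) - gOp) y‖ ≤ (2*δ) * ‖y‖ := by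
      intro y
      set z : WithLp 2 (H₁ × H₂) := (y : WithLp 2 (H₁ × H₂)) with hz
      set m : WithLp 2 (H₁ × H₂) := (Submodule.orthogonalProjectionOnto (graphE P) z : WithLp 2 (H₁ × H₂))
        with hm
      have h1 : (((1 : (graphE Q) →L[ℂ] (graphE Q)) - gOp) y : WithLp 2 (H₁ × H₂))
          = z - (Submodule.orthogonalProjectionOnto (graphE Q) m : WithLp 2 (H₁ × H₂)) := rfl
      have h2 : ‖((1 : (graphE Q) →L[ℂ] (graphE Q)) - gOp) y‖
          = ‖z - (Submodule.orthogonalProjectionOnto (graphE Q) m : WithLp 2 (H₁ × H₂))‖ := by rw [← h1]; rfl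
      rw [h2]
      have h3 : z - (Submodule.orthogonalProjectionOnto (graphE Q) m : WithLp 2 (H₁ × H₂))
          = (z - m) + (m - (Submodule.orthogonalProjectionOnto (graphE Q) m : WithLp 2 (H₁ × H₂))) := by abel
      rw [h3]
      have h4 : ‖z - m‖ ≤ δ * ‖z‖ := hQP z y.2
      have h5 : ‖m - (Submodule.orthogonalProjectionOnto (graphE Q) m : WithLp 2 (H₁ × H₂))‖ ≤ δ * ‖m‖ :=
        hPQ m (Submodule.orthogonalProjectionOnto (graphE P) z).2
      have h6 : ‖m‖ ≤ ‖z‖ := hprP z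
      calc ‖(z - m) + (m - (Submodule.orthogonalProjectionOnto (graphE Q) m : WithLp 2 (H₁ × H₂)))‖
          ≤ ‖z - m‖ + ‖m - (Submodule.orthogonalProjectionOnto (graphE Q) m : WithLp 2 (H₁ × H₂))‖ :=
            norm_add_le _ _
        _ ≤ δ * ‖z‖ + δ * ‖m‖ := add_le_add h4 h5
        _ ≤ δ * ‖z‖ + δ * ‖z‖ := by nlinarith
        _ = (2*δ) * ‖y‖ := by rw [hz]; ring_nf; rfl
    have h7 := ContinuousLinearMap.opNorm_le_bound _ (by positivity) hb
    calc ‖(1 : (graphE Q) →L[ℂ] (graphE Q)) - gOp‖ ≤ 2*δ := h7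
      _ < 1 := by linarith
  set v : ((graphE Q) →L[ℂ] (graphE Q))ˣ :=
    Units.oneSub ((1 : (graphE Q) →L[ℂ] (graphE Q)) - gOp) hone with hv
  have hvval : (v : (graphE Q) →L[ℂ] (graphE Q)) = gOp := by
    show (1 : (graphE Q) →L[ℂ] (graphE Q)) - ((1 : (graphE Q) →L[ℂ] (graphE Q)) - gOp) = gOp
    rw [sub_sub_cancel]
  have hfsurj : LinearMap.range f.toLinearMap = ⊤ := by
    rw [LinearMap.range_eq_top]
    intro y
    refine ⟨Submodule.orthogonalProjectionOnto (graphE P) ((v.inv y : graphE Q) : WithLp 2 (H₁ × H₂)), ?_⟩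
    have h1 : gOp (v.inv y) = y := by
      calc gOp (v.inv y) = (v : (graphE Q) →L[ℂ] (graphE Q)) (v.inv y) := by rw [hvval]
        _ = ((v : (graphE Q) →L[ℂ] (graphE Q)) * v.inv) y := rfl
        _ = y := by rw [Units.inv_eq_val_inv, v.mul_inv]; rfl
    rw [ContinuousLinearMap.coe_coe, ← hgOapp]
    exact h1
  set fE : (graphE P) ≃L[ℂ] (graphE Q) :=
    ContinuousLinearEquiv.ofBijective f hfinj hfsurj with hfE
  have hfEapp : ∀ x : graphE P, fE x = f x := fun x => rfl
  set S : (graphE P) →L[ℂ] H₂ :=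
    (opOf Q).comp (fE : (graphE P) →L[ℂ] (graphE Q)) with hS'
  have hSapp : ∀ x : graphE P, S x = opOf Q (fE x) := fun x => rfl
  have hST : ‖S - opOf P‖ ≤ δ := by
    refine ContinuousLinearMap.opNorm_le_bound _ hδ0 (fun x => ?_)
    have h1 : (S - opOf P) x = sndLp ((fE x : WithLp 2 (H₁ × H₂)) - (x : WithLp 2 (H₁ × H₂))) := by
      rw [ContinuousLinearMap.sub_apply, map_sub]
      rfl
    rw [h1]
    calc ‖sndLp ((fE x : WithLp 2 (H₁ × H₂)) - (x : WithLp 2 (H₁ × H₂)))‖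
        ≤ ‖(fE x : WithLp 2 (H₁ × H₂)) - (x : WithLp 2 (H₁ × H₂))‖ := norm_sndLp_le _
      _ = ‖(x : WithLp 2 (H₁ × H₂)) - (f x : WithLp 2 (H₁ × H₂))‖ := by
          rw [hfEapp, norm_sub_rev]
      _ ≤ δ * ‖x‖ := hfdist x
  have hindS := hstab S (lt_of_le_of_lt hST hδ1)
  -- translate kernels and ranges
  have hkerS : finrank ℂ (LinearMap.ker S.toLinearMap) = finrank ℂ (LinearMap.ker (opOf Q).toLinearMap) := by
    have hmap : (LinearMap.ker S.toLinearMap).map (fE.toLinearEquiv : (graphE P) →ₗ[ℂ] (graphE Q))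
        = LinearMap.ker (opOf Q).toLinearMap := by
      ext y
      constructor
      · rintro ⟨x, hx, rfl⟩
        show opOf Q (fE.toLinearEquiv x) = 0
        exact hx
      · intro hy
        refine ⟨fE.symm y, ?_, by simp⟩
        show opOf Q (fE (fE.symm y)) = 0
        rw [fE.apply_symm_apply]
        exact hy
    rw [← hmap, LinearEquiv.finrank_map_eq]
  have hrangeS : LinearMap.range S.toLinearMap = LinearMap.range (opOf Q).toLinearMap := by
    ext z
    constructor
    · rintro ⟨x, rfl⟩
      exact ⟨fE x, rfl⟩
    · rintro ⟨y, rfl⟩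
      refine ⟨fE.symm y, ?_⟩
      show opOf Q (fE (fE.symm y)) = opOf Q y
      rw [fE.apply_symm_apply]
  obtain ⟨eQ⟩ := ker_opOf Q
  have hQind : indPMap Q
      = (finrank ℂ (LinearMap.ker S.toLinearMap) : ℤ) - (finrank ℂ (H₂ ⧸ LinearMap.range S.toLinearMap) : ℤ) := by
    rw [indPMap]
    congr 2
    · rw [hkerS, ← eQ.finrank_eq]
    · rw [hrangeS, range_opOf]
  have hPind : indPMap P
      = (finrank ℂ (LinearMap.ker (opOf P).toLinearMap) : ℤ)
        - (finrank ℂ (H₂ ⧸ LinearMap.range (opOf P).toLinearMap) : ℤ) := by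
    rw [indPMap]
    congr 2
    · rw [← e0.finrank_eq]
    · rw [range_opOf]
  rw [hQind, hindS, ← hPind]
end Gap

theorem stmt_5
    {H₁ H₂ : Type*}
    [NormedAddCommGroup H₁] [InnerProductSpace ℂ H₁] [CompleteSpace H₁]
    [NormedAddCommGroup H₂] [InnerProductSpace ℂ H₂] [CompleteSpace H₂]
    (P : ℝ → (H₁ →ₗ.[ℂ] H₂))
    (hF : ∀ t ∈ Set.Icc (0 : ℝ) 1, IsFredholmPMap (P t))
    (hgap : ∀ t ∈ Set.Icc (0 : ℝ) 1, ∃ ε > 0, ∃ c > 0, ∀ s : ℝ, |s| ≤ ε →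
      t + s ∈ Set.Icc (0 : ℝ) 1 → gapHat (P t) (P (t + s)) ≤ c * |s|) :
    ∀ t₁ ∈ Set.Icc (0 : ℝ) 1, ∀ t₂ ∈ Set.Icc (0 : ℝ) 1,
      indPMap (P t₁) = indPMap (P t₂) := by
  intro t₁ ht₁ t₂ ht₂
  haveI : PreconnectedSpace (Set.Icc (0:ℝ) 1) := Subtype.preconnectedSpace isPreconnected_Icc
  set F : (Set.Icc (0:ℝ) 1) → ℤ := fun t => indPMap (P (t : ℝ)) with hF'
  have hlc : IsLocallyConstant F := by
    rw [IsLocallyConstant.iff_exists_open]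
    intro x
    obtain ⟨εs, hεs, hstep⟩ := local_index_step (P (x : ℝ)) (hF _ x.2)
    obtain ⟨ε, hε, c, hc, hlip⟩ := hgap (x : ℝ) x.2
    set δ := min ε (εs / (2*c)) with hδ
    have hδ0 : 0 < δ := lt_min hε (by positivity)
    refine ⟨Metric.ball x δ, Metric.isOpen_ball, Metric.mem_ball_self hδ0, ?_⟩
    intro y hy
    have hdist : |(y : ℝ) - (x : ℝ)| ≤ δ := by
      have h0 := hy
      rw [Metric.mem_ball, Subtype.dist_eq, Real.dist_eq] at h0
      exact h0.le
    have hyx : (x:ℝ) + ((y:ℝ) - (x:ℝ)) = (y:ℝ) := by ring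
    have hmem : (x : ℝ) + ((y : ℝ) - (x : ℝ)) ∈ Set.Icc (0:ℝ) 1 := by
      rw [hyx]; exact y.2
    have hgb := hlip ((y:ℝ) - (x:ℝ)) (hdist.trans (min_le_left _ _)) hmem
    have hsmall : gapHat (P (x:ℝ)) (P ((x:ℝ) + ((y:ℝ) - (x:ℝ)))) < εs := by
      have h1 : c * |(y:ℝ) - (x:ℝ)| ≤ c * (εs / (2*c)) :=
        mul_le_mul_of_nonneg_left (hdist.trans (min_le_right _ _)) hc.le
      have h2 : c * (εs / (2*c)) = εs/2 := by field_simp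
      have h3 : εs/2 < εs := by linarith
      calc gapHat (P (x:ℝ)) (P ((x:ℝ) + ((y:ℝ) - (x:ℝ)))) ≤ c * |(y:ℝ) - (x:ℝ)| := hgb
        _ ≤ εs/2 := by rw [← h2]; exact h1
        _ < εs := h3
    have hind := hstep (P ((x:ℝ) + ((y:ℝ) - (x:ℝ)))) (hF _ hmem) hsmall
    rw [hyx] at hind
    exact hind
  exact hlc.apply_eq_of_preconnectedSpace ⟨t₁, ht₁⟩ ⟨t₂, ht₂⟩
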